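/- arXiv:2412.18782 — 5 statements merged into one kernel-verified Lean document; each statement's English description precedes it below -/
import Mathlib

section
/- Let a ≠ 0 and suppose (β_n) satisfies a²(2β_n − n)² = β_n(2β_{n−1} + 2β_n − 2n + 1)(2β_n + 2β_{n+1} − 2n − 1) for all n ≥ 1. Define w_n := 4β_n/a², z_n := −2/a² + 4n/a², and C₃ := 2/a². Then (w_{n+1} + w_n − z_{n+1})(w_n + w_{n−1} − z_n)·w_n = (2w_n − C₃ − z_n)(2w_n + C₃ − z_{n+1}) for all n ≥ 1. -/
theorem stmt_2 (a : ℝ) (ha : a ≠ 0) (β : ℕ → ℝ)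
    (hde : ∀ n : ℕ, 1 ≤ n →
      a ^ 2 * (2 * β n - n) ^ 2 =
        β n * (2 * β (n - 1) + 2 * β n - 2 * n + 1) *
          (2 * β n + 2 * β (n + 1) - 2 * n - 1))
    (w z : ℕ → ℝ) (C₃ : ℝ)
    (hw : ∀ n : ℕ, w n = 4 * β n / a ^ 2)
    (hz : ∀ n : ℕ, z n = -2 / a ^ 2 + 4 * n / a ^ 2)
    (hC : C₃ = 2 / a ^ 2) :
    ∀ n : ℕ, 1 ≤ n →
      (w (n + 1) + w n - z (n + 1)) * (w n + w (n - 1) - z n) * w n =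
        (2 * w n - C₃ - z n) * (2 * w n + C₃ - z (n + 1)) := by
  intro n hn
  have h := hde n hn
  have ha2 : a ^ 2 ≠ 0 := pow_ne_zero 2 ha
  simp only [hw, hz, hC]
  push_cast
  field_simp
  linear_combination (-16) * h
end

section
/- Let a ∈ ℝ and let (β_n), (r_n), (R_n), (p_n) be real sequences satisfying: r_n = 2β_n − n; R_n = 2β_n + 2β_{n+1} − 2n − 1; p_n = −(1/4)·(Σ_{j=0}^{n−1} R_j) + r_n/4 − n(n−1)/4; and r_n² + 2a²r_n + Σ_{j=0}^{n−1} R_j = 2β_n(R_{n−1} + R_n) for all n ≥ 1. Then p_n = −(1/2)n a² − β_n(β_{n−1} + β_n + β_{n+1} − n − a² − 1/2). -/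
theorem stmt_4 (a : ℝ) (β r R p : ℕ → ℝ)
    (h1 : ∀ n : ℕ, r n = 2 * β n - n)
    (h2 : ∀ n : ℕ, R n = 2 * β n + 2 * β (n + 1) - 2 * n - 1)
    (h3 : ∀ n : ℕ, 1 ≤ n →
      p n = -(1 / 4) * (∑ j ∈ Finset.range n, R j) + r n / 4 -
        (n : ℝ) * ((n : ℝ) - 1) / 4)
    (h4 : ∀ n : ℕ, 1 ≤ n →
      (r n) ^ 2 + 2 * a ^ 2 * r n + (∑ j ∈ Finset.range n, R j) =
        2 * β n * (R (n - 1) + R n)) :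
    ∀ n : ℕ, 1 ≤ n →
      p n = -(1 / 2) * n * a ^ 2 -
        β n * (β (n - 1) + β n + β (n + 1) - n - a ^ 2 - 1 / 2) := by
  rintro n hn
  obtain ⟨m, rfl⟩ : ∃ m, n = m + 1 := ⟨n - 1, (Nat.succ_pred_eq_of_pos hn).symm⟩
  have hS : (∑ j ∈ Finset.range (m + 1), R j) =
      2 * β (m + 1) * (R m + R (m + 1)) - (r (m + 1)) ^ 2 - 2 * a ^ 2 * r (m + 1) := by
    have := h4 (m + 1) (Nat.le_add_left 1 m)
    simp only [Nat.add_sub_cancel] at this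
    linarith
  have hp := h3 (m + 1) (Nat.le_add_left 1 m)
  rw [hS] at hp
  simp only [Nat.add_sub_cancel]
  rw [hp, h1, h2 m, h2 (m + 1)]
  push_cast
  ring
end

section
/- Let β_n, R_n be differentiable real functions of a satisfying a·β_n′(a) = β_n(R_{n−1} − R_n) and R_n = 4(β_{n−1}β_n + (β_n+β_{n+1})² + β_{n+1}β_{n+2}) − 2n − 1 for all n ≥ 2. Then a·β_n′(a) = 2β_n[2β_{n−1}(β_{n−2}+β_{n−1}+β_n) − 2β_{n+1}(β_n+β_{n+1}+β_{n+2}) + 1]. -/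
theorem stmt_8 (a : ℝ) (β R : ℕ → ℝ → ℝ)
    (hβd : ∀ n : ℕ, Differentiable ℝ (β n))
    (hRd : ∀ n : ℕ, Differentiable ℝ (R n))
    (htoda : ∀ n : ℕ, 2 ≤ n →
      a * deriv (β n) a = β n a * (R (n - 1) a - R n a))
    (hR : ∀ n : ℕ, 1 ≤ n →
      R n a = 4 * (β (n - 1) a * β n a + (β n a + β (n + 1) a) ^ 2 +
        β (n + 1) a * β (n + 2) a) - 2 * n - 1) :
    ∀ n : ℕ, 2 ≤ n →
      a * deriv (β n) a =
        2 * β n a *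
          (2 * β (n - 1) a * (β (n - 2) a + β (n - 1) a + β n a) -
            2 * β (n + 1) a * (β n a + β (n + 1) a + β (n + 2) a) + 1) := by
  rintro n hn
  obtain ⟨m, rfl⟩ : ∃ m, n = m + 2 := ⟨n - 2, by omega⟩
  have h1 := hR (m + 1) (by omega)
  have h2 := hR (m + 2) (by omega)
  have ht := htoda (m + 2) (by omega)
  simp only [Nat.add_sub_cancel, show m + 1 - 1 = m from rfl,
    show m + 2 - 1 = m + 1 from rfl, show m + 2 - 2 = m from rfl] at *
  rw [ht, h1, h2]
  push_cast
  ring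
end

section
/- Let a ∈ ℝ and let (β_n), (r_n), (R_n), (p_n) be real sequences satisfying: Σ_{j=0}^{n−1}(β_j + β_{j+1}) = −2p_n + β_n; r_n(a² + 2β_n) + Σ_{j=0}^{n−1}(β_j + β_{j+1}) = β_n[R_{n−1} + R_n + 4(β_{n−1}+β_n)(β_n+β_{n+1})]; r_n = 4β_n(β_{n−1}+β_n+β_{n+1}) − n; and R_n = 4(β_{n−1}β_n + (β_n+β_{n+1})² + β_{n+1}β_{n+2}) − 2n − 1. Then p_n = −(1/2)n a² − 2β_n[β_{n−1}(β_{n−2}+β_{n−1}+2β_n+β_{n+1}−a²) + (β_n+β_{n+1})(β_n+β_{n+1}−a²) + β_{n+1}β_{n+2} − n/2 − 1/4]. -/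
theorem stmt_9 (a : ℝ) (β r R p : ℕ → ℝ)
    (h1 : ∀ n : ℕ, 2 ≤ n →
      (∑ j ∈ Finset.range n, (β j + β (j + 1))) = -2 * p n + β n)
    (h2 : ∀ n : ℕ, 2 ≤ n →
      r n * (a ^ 2 + 2 * β n) + (∑ j ∈ Finset.range n, (β j + β (j + 1))) =
        β n * (R (n - 1) + R n +
          4 * (β (n - 1) + β n) * (β n + β (n + 1))))
    (h3 : ∀ n : ℕ, 1 ≤ n →
      r n = 4 * β n * (β (n - 1) + β n + β (n + 1)) - n)
    (h4 : ∀ n : ℕ, 1 ≤ n →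
      R n = 4 * (β (n - 1) * β n + (β n + β (n + 1)) ^ 2 +
        β (n + 1) * β (n + 2)) - 2 * n - 1) :
    ∀ n : ℕ, 2 ≤ n →
      p n = -(1 / 2) * n * a ^ 2 -
        2 * β n *
          (β (n - 1) * (β (n - 2) + β (n - 1) + 2 * β n + β (n + 1) - a ^ 2) +
            (β n + β (n + 1)) * (β n + β (n + 1) - a ^ 2) +
            β (n + 1) * β (n + 2) - (n : ℝ) / 2 - 1 / 4) := by
  rintro n hn
  obtain ⟨m, rfl⟩ : ∃ m, n = m + 2 := ⟨n - 2, by omega⟩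
  have h1' := h1 (m + 2) (by omega)
  have h2' := h2 (m + 2) (by omega)
  have h3' := h3 (m + 2) (by omega)
  have h4a := h4 (m + 2) (by omega)
  have h4b := h4 (m + 1) (by omega)
  simp only [show m + 2 - 1 = m + 1 from rfl, show m + 2 - 2 = m from rfl,
    show m + 1 - 1 = m from rfl, show m + 1 + 1 = m + 2 from rfl,
    show m + 1 + 2 = m + 3 from rfl, show m + 2 + 1 = m + 3 from rfl,
    show m + 2 + 2 = m + 4 from rfl] at *
  rw [h3', h4a, h4b] at h2'
  push_cast at *
  linarith [h2', h1', sq_nonneg (β (m+2))]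
end

section
/- Let β_n, R_n be differentiable real functions of a satisfying a·β_n′(a) = β_n(R_{n−1} − R_n), where R_n = 6β_n[β_{n−2}β_{n−1} + (β_n+β_{n+1})² + β_{n−1}(β_{n−1}+2β_n+β_{n+1}) + β_{n+1}β_{n+2}] + 6β_{n+1}[β_{n−1}β_n + (β_{n+1}+β_{n+2})² + β_n(β_n+2β_{n+1}+β_{n+2}) + β_{n+2}β_{n+3}] − 2n − 1. Then a·β_n′(a) = 2β_n[3β_{n−1}(β_{n−3}β_{n−2} + (β_{n−1}+β_n)² + β_{n−2}(β_{n−2}+2β_{n−1}+β_n) + β_nβ_{n+1}) − 3β_{n+1}(β_{n−1}β_n + (β_{n+1}+β_{n+2})² + β_n(β_n+2β_{n+1}+β_{n+2}) + β_{n+2}β_{n+3}) + 1]. -/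
theorem stmt_14 (a : ℝ) (β R : ℕ → ℝ → ℝ)
    (hβd : ∀ n : ℕ, Differentiable ℝ (β n))
    (htoda : ∀ n : ℕ, 3 ≤ n →
      a * deriv (β n) a = β n a * (R (n - 1) a - R n a))
    (hR : ∀ n : ℕ, 2 ≤ n →
      R n a = 6 * β n a * (β (n - 2) a * β (n - 1) a +
          (β n a + β (n + 1) a) ^ 2 +
          β (n - 1) a * (β (n - 1) a + 2 * β n a + β (n + 1) a) +
          β (n + 1) a * β (n + 2) a) +
        6 * β (n + 1) a * (β (n - 1) a * β n a +
          (β (n + 1) a + β (n + 2) a) ^ 2 +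
          β n a * (β n a + 2 * β (n + 1) a + β (n + 2) a) +
          β (n + 2) a * β (n + 3) a) - 2 * n - 1) :
    ∀ n : ℕ, 3 ≤ n →
      a * deriv (β n) a =
        2 * β n a *
          (3 * β (n - 1) a * (β (n - 3) a * β (n - 2) a +
              (β (n - 1) a + β n a) ^ 2 +
              β (n - 2) a * (β (n - 2) a + 2 * β (n - 1) a + β n a) +
              β n a * β (n + 1) a) -
            3 * β (n + 1) a * (β (n - 1) a * β n a +
              (β (n + 1) a + β (n + 2) a) ^ 2 +
              β n a * (β n a + 2 * β (n + 1) a + β (n + 2) a) +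
              β (n + 2) a * β (n + 3) a) + 1) := by
  intro n hn
  obtain ⟨m, rfl⟩ : ∃ m, n = m + 3 := ⟨n - 3, by omega⟩
  have h1 := htoda (m + 3) (by omega)
  have h2 := hR (m + 2) (by omega)
  have h3 := hR (m + 3) (by omega)
  simp only [show m + 3 - 1 = m + 2 from rfl, show m + 3 - 2 = m + 1 from rfl,
    show m + 3 - 3 = m from rfl, show m + 2 - 1 = m + 1 from rfl,
    show m + 2 - 2 = m from rfl] at h1 h2 h3 ⊢
  rw [h1, h2, h3]
  push_cast
  ring
end
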